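/- Let w ∈ F_p^p be a vector orthogonal (in F_p) to the vectors (j^l)_{j=0,...,p-1} for all l = 0, 1, ..., k where k ≤ p-1. Then w lies in the span of the vectors (j^l)_{j=0,...,p-1} for l = 0, 1, ..., p-2-k. -/
import Mathlib


theorem stmt_16 (p : ℕ) [Fact p.Prime] (k : ℕ) (hk : k ≤ p - 1)
    (w : ZMod p → ZMod p)
    (hw : ∀ l : ℕ, l ≤ k → ∑ j : ZMod p, w j * j ^ l = 0) :
    w ∈ Submodule.span (ZMod p)
      {v : ZMod p → ZMod p | ∃ l : ℕ, (l : ℤ) ≤ (p : ℤ) - 2 - k ∧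
        v = fun j : ZMod p => j ^ l} := by
  have hp : p.Prime := Fact.out
  have hp1 : 1 < p := hp.one_lt
  -- key delta identity
  have key : ∀ a j : ZMod p,
      (∑ i ∈ Finset.range p, j ^ i * a ^ (p - 1 - i)) = if a = j then 0 else 1 := by
    intro a j
    by_cases h : a = j
    · subst h
      simp only [if_true]
      have h1 : ∀ i ∈ Finset.range p, a ^ i * a ^ (p - 1 - i) = a ^ (p - 1) := by
        intro i hi
        rw [Finset.mem_range] at hi
        rw [← pow_add]
        congr 1
        omega
      rw [Finset.sum_congr rfl h1, Finset.sum_const, Finset.card_range, nsmul_eq_mul,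
        ZMod.natCast_self, zero_mul]
    · simp only [h, if_false]
      have hmul := geom_sum₂_mul j a p
      rw [ZMod.pow_card, ZMod.pow_card] at hmul
      have hne : j - a ≠ 0 := sub_ne_zero.mpr (Ne.symm h)
      have : (∑ i ∈ Finset.range p, j ^ i * a ^ (p - 1 - i)) * (j - a) = 1 * (j - a) := by
        rw [hmul, one_mul]
      exact mul_right_cancel₀ hne this
  have hw0 : ∑ a : ZMod p, w a = 0 := by
    simpa using hw 0 (Nat.zero_le k)
  set c : ℕ → ZMod p := fun i => -∑ a : ZMod p, w a * a ^ (p - 1 - i) with hc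
  -- pointwise formula
  have hformula : ∀ j : ZMod p, w j = ∑ i ∈ Finset.range p, c i * j ^ i := by
    intro j
    have h1 : w j = ∑ a : ZMod p, w a * (1 - ∑ i ∈ Finset.range p, j ^ i * a ^ (p - 1 - i)) := by
      rw [Finset.sum_congr rfl (fun a _ => by rw [key a j])]
      simp [apply_ite (fun x : ZMod p => (1 : ZMod p) - x), mul_ite]
    rw [h1]
    simp only [mul_sub, mul_one, Finset.sum_sub_distrib, hw0, zero_sub, Finset.mul_sum]
    rw [Finset.sum_comm]
    rw [← Finset.sum_neg_distrib]
    refine Finset.sum_congr rfl fun i _ => ?_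
    rw [hc]
    simp only [neg_mul, neg_inj]
    rw [Finset.sum_mul]
    refine Finset.sum_congr rfl fun a _ => ?_
    ring
  have hwe : w = ∑ i ∈ Finset.range p, c i • (fun j : ZMod p => j ^ i) := by
    funext j
    rw [hformula j]
    simp [Finset.sum_apply]
  rw [hwe]
  apply Submodule.sum_mem
  intro i hi
  rw [Finset.mem_range] at hi
  by_cases hci : c i = 0
  · rw [hci, zero_smul]; exact Submodule.zero_mem _
  · apply Submodule.smul_mem
    apply Submodule.subset_span
    refine ⟨i, ?_, rfl⟩
    by_contra hgt
    push_neg at hgt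
    apply hci
    have hle : p - 1 - i ≤ k := by omega
    rw [hc]
    simp only [hw _ hle, neg_zero]
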